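/- For the 7-dimensional Lie algebra L_{7,6} with nonzero brackets [X_1,X_2]=2X_2, [X_1,X_3]=-2X_3, [X_2,X_3]=X_1, [X_1,X_4]=3X_4, [X_1,X_5]=X_5, [X_1,X_6]=-X_6, [X_1,X_7]=-3X_7, [X_2,X_5]=3X_4, [X_2,X_6]=2X_5, [X_2,X_7]=X_6, [X_3,X_4]=X_5, [X_3,X_5]=2X_6, [X_3,X_6]=3X_7, the polynomial I_1 = 27 x_4^2 x_7^2 - 18 x_4 x_5 x_6 x_7 - x_5^2 x_6^2 + 4 x_6^3 x_4 + 4 x_7 x_5^3 is annihilated by all coadjoint vector fields X̂_i = C_{ij}^k x_k ∂/∂x_j, i = 1,…,7. -/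

import Mathlib

open scoped BigOperators

noncomputable def Xhat {n : ℕ} (C : Fin n → Fin n → Fin n → ℝ)
    (F : (Fin n → ℝ) → ℝ) (i : Fin n) (x : Fin n → ℝ) : ℝ :=
  ∑ j, ∑ k, C i j k * x k * fderiv ℝ F x (Pi.single j 1)

def C76 : Fin 7 → Fin 7 → Fin 7 → ℝ := fun i j k =>
  match i.1, j.1, k.1 with
  | 0, 1, 1 => 2
  | 1, 0, 1 => -2
  | 0, 2, 2 => -2
  | 2, 0, 2 => 2
  | 1, 2, 0 => 1
  | 2, 1, 0 => -1
  | 0, 3, 3 => 3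
  | 3, 0, 3 => -3
  | 0, 4, 4 => 1
  | 4, 0, 4 => -1
  | 0, 5, 5 => -1
  | 5, 0, 5 => 1
  | 0, 6, 6 => -3
  | 6, 0, 6 => 3
  | 1, 4, 3 => 3
  | 4, 1, 3 => -3
  | 1, 5, 4 => 2
  | 5, 1, 4 => -2
  | 1, 6, 5 => 1
  | 6, 1, 5 => -1
  | 2, 3, 4 => 1
  | 3, 2, 4 => -1
  | 2, 4, 5 => 2
  | 4, 2, 5 => -2
  | 2, 5, 6 => 3
  | 5, 2, 6 => -3
  | _, _, _ => 0

lemma gradF (x : Fin 7 → ℝ) (v : Fin 7 → ℝ) :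
    fderiv ℝ (fun y : Fin 7 → ℝ => 27 * (y 3)^2 * (y 6)^2 - 18 * y 3 * y 4 * y 5 * y 6
        - (y 4)^2 * (y 5)^2 + 4 * (y 5)^3 * y 3 + 4 * y 6 * (y 4)^3) x v =
      (54 * x 3 * (x 6)^2 - 18 * x 4 * x 5 * x 6 + 4 * (x 5)^3) * v 3
      + (-18 * x 3 * x 5 * x 6 - 2 * x 4 * (x 5)^2 + 12 * x 6 * (x 4)^2) * v 4
      + (-18 * x 3 * x 4 * x 6 - 2 * (x 4)^2 * x 5 + 12 * (x 5)^2 * x 3) * v 5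
      + (54 * (x 3)^2 * x 6 - 18 * x 3 * x 4 * x 5 + 4 * (x 4)^3) * v 6 := by
  have eF : (fun y : Fin 7 → ℝ => 27 * (y 3)^2 * (y 6)^2 - 18 * y 3 * y 4 * y 5 * y 6
        - (y 4)^2 * (y 5)^2 + 4 * (y 5)^3 * y 3 + 4 * y 6 * (y 4)^3)
      = (fun y : Fin 7 → ℝ => (27 * (y 3 * y 3)) * (y 6 * y 6)
        - 18 * y 3 * y 4 * y 5 * y 6 - (y 4 * y 4) * (y 5 * y 5)
        + (4 * (y 5 * y 5 * y 5)) * y 3 + (4 * y 6) * (y 4 * (y 4 * y 4))) := by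
    funext y; ring
  rw [eF]
  have h : ∀ i : Fin 7, HasFDerivAt (fun y : Fin 7 → ℝ => y i)
      ((ContinuousLinearMap.proj i : (Fin 7 → ℝ) →L[ℝ] ℝ)) x :=
    fun i => hasFDerivAt_apply i x
  have H := (((((((h 3).mul (h 3)).const_mul (27:ℝ)).mul ((h 6).mul (h 6))).sub
      (((((h 3).const_mul (18:ℝ)).mul (h 4)).mul (h 5)).mul (h 6))).sub
      (((h 4).mul (h 4)).mul ((h 5).mul (h 5)))).add
      (((((h 5).mul (h 5)).mul (h 5)).const_mul (4:ℝ)).mul (h 3))).add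
      (((h 6).const_mul (4:ℝ)).mul ((h 4).mul ((h 4).mul (h 4))))
  erw [H.fderiv]
  simp [ContinuousLinearMap.proj_apply, smul_eq_mul]
  ring

set_option maxHeartbeats 2000000

theorem L76_invariant :
    ∀ (i : Fin 7) (x : Fin 7 → ℝ),
      Xhat C76 (fun y => 27 * (y 3)^2 * (y 6)^2 - 18 * y 3 * y 4 * y 5 * y 6
        - (y 4)^2 * (y 5)^2 + 4 * (y 5)^3 * y 3 + 4 * y 6 * (y 4)^3) i x = 0 := by
  intro i x
  fin_cases i <;>
  · simp only [Xhat, Fin.sum_univ_seven, gradF, Pi.single_apply,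
      Fin.isValue, Fin.reduceEq, reduceIte, mul_zero, zero_mul, mul_one,
      add_zero, zero_add, neg_zero, sub_zero, zero_sub, mul_neg, neg_mul]
    simp only [C76, Fin.coe_ofNat_eq_mod, Nat.reduceMod]
    ring
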